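/- Let d and r₂ be positive integers and k ∈ ℤ_{++}^{r₂} (with the convention k_{r₂+1} := 0). Then, in ℂ[X], the polynomial ∏_{1≤i≤j≤r₂+1}(X − d(i+j−2)/2)_{⌊(k_i+k_j)/2⌋} · ∏_{1≤i<j≤r₂+1}(X − 1/2 − d(i+j−2)/2)_{⌈(k_i+k_j)/2⌉} divides the polynomial (X)_{φ₂(k),d} · ∏_{1≤i<j≤r₂}(X − d(i+j−1)/2)_{⌊(k_i+k_j)/2⌋} · ∏_{1≤i≤j≤r₂}(X − 1/2 − d(i+j−1)/2)_{⌈(k_i+k_j)/2⌉}, where (X)_{φ₂(k),d} := ∏_{a=1}^{2r₂}(X − d(a−1)/2)_{φ₂(k)_a}. Equivalently, the rational function (λ)_{φ₂(k),d} · C₂^{d,2d}(λ,k) extends to a polynomial in λ. -/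
import Mathlib


open Polynomial Finset

/-- `(X - c)_m := ∏_{t=0}^{m-1} (X - c + t)` in `ℂ[X]`. -/
noncomputable def pochPoly (c : ℂ) (m : ℕ) : Polynomial ℂ :=
  ∏ t ∈ Finset.range m, (Polynomial.X - Polynomial.C c + (t : Polynomial ℂ))

/-- `φ₂(k)_a := min{⌊(k_i + k_j)/2⌋ : 1 ≤ i ≤ j ≤ r₂+1, i+j = a+1}`. -/
noncomputable def phi2 (r₂ : ℕ) (k : ℕ → ℕ) (a : ℕ) : ℕ :=
  sInf {m : ℕ | ∃ i j : ℕ, 1 ≤ i ∧ i ≤ j ∧ j ≤ r₂ + 1 ∧ i + j = a + 1 ∧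
    m = (k i + k j) / 2}

/-- The denominator
`∏_{1≤i≤j≤r₂+1}(X − d(i+j−2)/2)_{⌊(k_i+k_j)/2⌋}·∏_{1≤i<j≤r₂+1}(X − 1/2 − d(i+j−2)/2)_{⌈(k_i+k_j)/2⌉}`
of `C₂^{d,2d}`. -/
noncomputable def denom2 (d r₂ : ℕ) (k : ℕ → ℕ) : Polynomial ℂ :=
  (∏ i ∈ Finset.Icc 1 (r₂ + 1), ∏ j ∈ Finset.Icc i (r₂ + 1),
    pochPoly ((d : ℂ) * ((i : ℂ) + (j : ℂ) - 2) / 2) ((k i + k j) / 2)) *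
  ∏ i ∈ Finset.Icc 1 (r₂ + 1), ∏ j ∈ Finset.Icc (i + 1) (r₂ + 1),
    pochPoly (1 / 2 + (d : ℂ) * ((i : ℂ) + (j : ℂ) - 2) / 2) ((k i + k j + 1) / 2)

/-- The numerator
`∏_{1≤i<j≤r₂}(X − d(i+j−1)/2)_{⌊(k_i+k_j)/2⌋}·∏_{1≤i≤j≤r₂}(X − 1/2 − d(i+j−1)/2)_{⌈(k_i+k_j)/2⌉}`
of `C₂^{d,2d}`. -/
noncomputable def numer2 (d r₂ : ℕ) (k : ℕ → ℕ) : Polynomial ℂ :=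
  (∏ i ∈ Finset.Icc 1 r₂, ∏ j ∈ Finset.Icc (i + 1) r₂,
    pochPoly ((d : ℂ) * ((i : ℂ) + (j : ℂ) - 1) / 2) ((k i + k j) / 2)) *
  ∏ i ∈ Finset.Icc 1 r₂, ∏ j ∈ Finset.Icc i r₂,
    pochPoly (1 / 2 + (d : ℂ) * ((i : ℂ) + (j : ℂ) - 1) / 2) ((k i + k j + 1) / 2)

/-- The polynomial `(X)_{φ₂(k),d} = ∏_{a=1}^{2r₂}(X − d(a−1)/2)_{φ₂(k)_a}`. -/
noncomputable def phiPoly2 (d r₂ : ℕ) (k : ℕ → ℕ) : Polynomial ℂ :=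
  ∏ a ∈ Finset.Icc 1 (2 * r₂),
    pochPoly ((d : ℂ) * ((a : ℂ) - 1) / 2) (phi2 r₂ k a)

lemma pochPoly_dvd_of_le (c : ℂ) {m m' : ℕ} (h : m ≤ m') : pochPoly c m ∣ pochPoly c m' :=
  Finset.prod_dvd_prod_of_subset _ _ _ (Finset.range_subset_range.2 h)

lemma pochPoly_zero (c : ℂ) : pochPoly c 0 = 1 := by simp [pochPoly]

lemma prod_dvd_prod_of_inj {ι κ M : Type*} [CommMonoid M] [DecidableEq κ]
    (S : Finset ι) (T : Finset κ) (f : ι → M) (g : κ → M) (σ : ι → κ)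
    (hmaps : ∀ a ∈ S, σ a ∈ T)
    (hinj : ∀ a ∈ S, ∀ b ∈ S, σ a = σ b → a = b)
    (hdvd : ∀ a ∈ S, f a ∣ g (σ a)) :
    ∏ a ∈ S, f a ∣ ∏ b ∈ T, g b :=
  dvd_trans (Finset.prod_dvd_prod_of_dvd _ _ hdvd)
    (dvd_trans (dvd_of_eq (Finset.prod_image hinj).symm)
      (Finset.prod_dvd_prod_of_subset _ _ _ (Finset.image_subset_iff.2 hmaps)))

noncomputable def istar (r₂ : ℕ) (k : ℕ → ℕ) (s : ℕ) : ℕ :=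
  sInf {i | 1 ≤ i ∧ i + i ≤ s ∧ s ≤ i + r₂ + 1 ∧ (k i + k (s - i)) / 2 = phi2 r₂ k (s - 1)}

lemma istar_spec (r₂ : ℕ) (k : ℕ → ℕ) {i j : ℕ} (hi : 1 ≤ i) (hij : i ≤ j)
    (hj : j ≤ r₂ + 1) :
    1 ≤ istar r₂ k (i + j) ∧ istar r₂ k (i + j) + istar r₂ k (i + j) ≤ i + j ∧
    i + j ≤ istar r₂ k (i + j) + r₂ + 1 ∧
    (k (istar r₂ k (i + j)) + k ((i + j) - istar r₂ k (i + j))) / 2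
      = phi2 r₂ k (i + j - 1) := by
  have hA : {m : ℕ | ∃ i' j' : ℕ, 1 ≤ i' ∧ i' ≤ j' ∧ j' ≤ r₂ + 1 ∧ i' + j' = (i + j - 1) + 1 ∧
      m = (k i' + k j') / 2}.Nonempty :=
    ⟨(k i + k j) / 2, i, j, hi, hij, hj, by omega, rfl⟩
  have hmem0 : phi2 r₂ k (i + j - 1) ∈ {m : ℕ | ∃ i' j' : ℕ, 1 ≤ i' ∧ i' ≤ j' ∧ j' ≤ r₂ + 1 ∧
      i' + j' = (i + j - 1) + 1 ∧ m = (k i' + k j') / 2} := by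
    rw [phi2]; exact Nat.sInf_mem hA
  obtain ⟨i₀, j₀, h1, h2, h3, h4, h5⟩ := hmem0
  have hs : i₀ + j₀ = i + j := by omega
  have : istar r₂ k (i + j) ∈ {i' | 1 ≤ i' ∧ i' + i' ≤ i + j ∧ i + j ≤ i' + r₂ + 1 ∧
      (k i' + k ((i + j) - i')) / 2 = phi2 r₂ k (i + j - 1)} := by
    apply Nat.sInf_mem
    refine ⟨i₀, h1, by omega, by omega, ?_⟩
    rw [show i + j - i₀ = j₀ by omega]
    exact h5.symm
  exact this
noncomputable def g2 (d r₂ : ℕ) (k : ℕ → ℕ) (p : ℕ × ℕ) : Polynomial ℂ :=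
  if p.1 = 0 then pochPoly ((d : ℂ) * ((p.2 : ℂ) - 1) / 2) (phi2 r₂ k p.2)
  else pochPoly ((d : ℂ) * ((p.1 : ℂ) + (p.2 : ℂ) - 1) / 2) ((k p.1 + k p.2) / 2)

noncomputable def sig2 (r₂ : ℕ) (k : ℕ → ℕ) (p : Σ _ : ℕ, ℕ) : ℕ × ℕ :=
  if p.1 = istar r₂ k (p.1 + p.2) then (0, p.1 + p.2 - 1)
  else if p.1 < istar r₂ k (p.1 + p.2) then (p.1, p.2 - 1)
  else (p.1 - 1, p.2)

noncomputable def tau2 (r₂ : ℕ) (k : ℕ → ℕ) (q : ℕ × ℕ) : Σ _ : ℕ, ℕ :=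
  if q.1 = 0 then ⟨istar r₂ k (q.2 + 1), q.2 + 1 - istar r₂ k (q.2 + 1)⟩
  else if q.1 < istar r₂ k (q.1 + q.2 + 1) then ⟨q.1, q.2 + 1⟩
  else ⟨q.1 + 1, q.2⟩

lemma sig2_mk (r₂ : ℕ) (k : ℕ → ℕ) (i j : ℕ) :
    sig2 r₂ k ⟨i, j⟩ = if i = istar r₂ k (i + j) then ((0 : ℕ), i + j - 1)
      else if i < istar r₂ k (i + j) then (i, j - 1) else (i - 1, j) := rfl

lemma tau2_mk (r₂ : ℕ) (k : ℕ → ℕ) (x y : ℕ) :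
    tau2 r₂ k (x, y) = if x = 0 then
      (⟨istar r₂ k (y + 1), y + 1 - istar r₂ k (y + 1)⟩ : Σ _ : ℕ, ℕ)
    else if x < istar r₂ k (x + y + 1) then ⟨x, y + 1⟩ else ⟨x + 1, y⟩ := rfl

lemma g2_mk (d r₂ : ℕ) (k : ℕ → ℕ) (x y : ℕ) :
    g2 d r₂ k (x, y) = if x = 0 then pochPoly ((d : ℂ) * ((y : ℂ) - 1) / 2) (phi2 r₂ k y)
      else pochPoly ((d : ℂ) * ((x : ℂ) + (y : ℂ) - 1) / 2) ((k x + k y) / 2) := rfl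

lemma D2_dvd_N2 (d r₂ : ℕ) (k : ℕ → ℕ) (kmono : ∀ i j, 1 ≤ i → i ≤ j → j ≤ r₂ + 1 → k j ≤ k i) :
    (∏ i ∈ Finset.Icc 1 (r₂ + 1), ∏ j ∈ Finset.Icc (i + 1) (r₂ + 1),
      pochPoly (1 / 2 + (d : ℂ) * ((i : ℂ) + (j : ℂ) - 2) / 2) ((k i + k j + 1) / 2)) ∣
    ∏ i ∈ Finset.Icc 1 r₂, ∏ j ∈ Finset.Icc i r₂,
      pochPoly (1 / 2 + (d : ℂ) * ((i : ℂ) + (j : ℂ) - 1) / 2) ((k i + k j + 1) / 2) := by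
  rw [Finset.prod_sigma', Finset.prod_sigma']
  apply prod_dvd_prod_of_inj _ _ _ _ (fun p => (⟨p.1, p.2 - 1⟩ : Σ _ : ℕ, ℕ))
  · rintro ⟨i, j⟩ hp
    simp only [Finset.mem_sigma, Finset.mem_Icc] at hp ⊢
    omega
  · rintro ⟨i, j⟩ hp ⟨i', j'⟩ hp' h
    simp only [Finset.mem_sigma, Finset.mem_Icc] at hp hp'
    simp only [Sigma.mk.inj_iff, heq_eq_eq] at h ⊢
    omega
  · rintro ⟨i, j⟩ hp
    simp only [Finset.mem_sigma, Finset.mem_Icc] at hp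
    have hc : (1 / 2 + (d : ℂ) * ((i : ℂ) + ((j - 1 : ℕ) : ℂ) - 1) / 2)
        = 1 / 2 + (d : ℂ) * ((i : ℂ) + (j : ℂ) - 2) / 2 := by
      rw [Nat.cast_sub (show 1 ≤ j by omega)]; push_cast; ring
    simp only []
    rw [hc]
    apply pochPoly_dvd_of_le
    have : k j ≤ k (j - 1) := kmono (j - 1) j (by omega) (by omega) (by omega)
    exact Nat.div_le_div_right (by omega)

lemma D1_dvd_phi_mul_N1 (d r₂ : ℕ) (k : ℕ → ℕ)
    (kmono : ∀ i j, 1 ≤ i → i ≤ j → j ≤ r₂ + 1 → k j ≤ k i) (hk0 : k (r₂ + 1) = 0) :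
    (∏ i ∈ Finset.Icc 1 (r₂ + 1), ∏ j ∈ Finset.Icc i (r₂ + 1),
      pochPoly ((d : ℂ) * ((i : ℂ) + (j : ℂ) - 2) / 2) ((k i + k j) / 2)) ∣
    phiPoly2 d r₂ k * ∏ i ∈ Finset.Icc 1 r₂, ∏ j ∈ Finset.Icc (i + 1) r₂,
      pochPoly ((d : ℂ) * ((i : ℂ) + (j : ℂ) - 1) / 2) ((k i + k j) / 2) := by
  classical
  set T : Finset (ℕ × ℕ) :=
    ((Finset.Icc 1 (2 * r₂)).image fun a => ((0 : ℕ), a)) ∪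
    (((Finset.Icc 1 r₂).sigma fun i => Finset.Icc (i + 1) r₂).image
      fun p => ((p.1 : ℕ), (p.2 : ℕ))) with hT
  have hdisj : Disjoint ((Finset.Icc 1 (2 * r₂)).image fun a => ((0 : ℕ), a))
      (((Finset.Icc 1 r₂).sigma fun i => Finset.Icc (i + 1) r₂).image
        fun p => ((p.1 : ℕ), (p.2 : ℕ))) := by
    rw [Finset.disjoint_left]
    rintro ⟨x, y⟩ hx hy
    simp only [Finset.mem_image, Finset.mem_Icc, Finset.mem_sigma, Prod.mk.injEq] at hx hy
    obtain ⟨a, _, ha0, -⟩ := hx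
    obtain ⟨p, ⟨⟨hp1, -⟩, -⟩, hp0, -⟩ := hy
    omega
  have hRHS : phiPoly2 d r₂ k * (∏ i ∈ Finset.Icc 1 r₂, ∏ j ∈ Finset.Icc (i + 1) r₂,
      pochPoly ((d : ℂ) * ((i : ℂ) + (j : ℂ) - 1) / 2) ((k i + k j) / 2))
      = ∏ p ∈ T, g2 d r₂ k p := by
    rw [hT, Finset.prod_union hdisj]
    congr 1
    · rw [Finset.prod_image (by intro x _ y _ h; simpa using h)]
      rw [phiPoly2]
      exact Finset.prod_congr rfl fun a _ => by rw [g2_mk, if_pos rfl]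
    · rw [Finset.prod_image (by
        rintro ⟨x1, x2⟩ _ ⟨y1, y2⟩ _ h
        simp only [Prod.mk.injEq] at h
        simp only [Sigma.mk.inj_iff, heq_eq_eq]
        exact ⟨h.1, h.2⟩)]
      rw [Finset.prod_sigma']
      apply Finset.prod_congr rfl
      rintro ⟨i, j⟩ hp
      simp only [Finset.mem_sigma, Finset.mem_Icc] at hp
      simp only []
      rw [g2_mk, if_neg (by omega)]
  rw [hRHS, Finset.prod_sigma']
  rw [← Finset.prod_erase ((Finset.Icc 1 (r₂ + 1)).sigma fun i => Finset.Icc i (r₂ + 1))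
      (a := ⟨r₂ + 1, r₂ + 1⟩) (by simp [hk0, pochPoly_zero])]
  have key : ∀ p ∈ (((Finset.Icc 1 (r₂ + 1)).sigma fun i => Finset.Icc i (r₂ + 1)).erase
      ⟨r₂ + 1, r₂ + 1⟩), sig2 r₂ k p ∈ T ∧ tau2 r₂ k (sig2 r₂ k p) = p ∧
      pochPoly ((d : ℂ) * (((p.1 : ℕ) : ℂ) + ((p.2 : ℕ) : ℂ) - 2) / 2) ((k p.1 + k p.2) / 2)
        ∣ g2 d r₂ k (sig2 r₂ k p) := by
    rintro ⟨i, j⟩ hp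
    simp only [Finset.mem_erase, Finset.mem_sigma, Finset.mem_Icc] at hp
    obtain ⟨hne, ⟨hi1, hir⟩, hij, hjr⟩ := hp
    have hne' : ¬(i = r₂ + 1 ∧ j = r₂ + 1) := by
      rintro ⟨rfl, rfl⟩; exact hne rfl
    have hs2 : 2 ≤ i + j := by omega
    have hsmall : i + j ≤ 2 * r₂ + 1 := by omega
    obtain ⟨hm1, hm2, hm3, hm4⟩ := istar_spec r₂ k hi1 hij hjr
    simp only []
    by_cases hc1 : i = istar r₂ k (i + j)
    · -- minimizer: map to the Φ factor
      have hσ : sig2 r₂ k ⟨i, j⟩ = (0, i + j - 1) := by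
        rw [sig2_mk, if_pos hc1]
      refine ⟨?_, ?_, ?_⟩
      · rw [hσ, hT]
        exact Finset.mem_union_left _ (Finset.mem_image.2 ⟨i + j - 1,
          Finset.mem_Icc.2 ⟨by omega, by omega⟩, rfl⟩)
      · rw [hσ, tau2_mk, if_pos rfl, show i + j - 1 + 1 = i + j by omega]
        simp only [Sigma.mk.inj_iff, heq_eq_eq, true_and, and_true]
        omega
      · rw [hσ, g2_mk, if_pos rfl]
        have hc : (d : ℂ) * (((i + j - 1 : ℕ) : ℂ) - 1) / 2
            = (d : ℂ) * ((i : ℂ) + (j : ℂ) - 2) / 2 := by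
          rw [Nat.cast_sub (show 1 ≤ i + j by omega)]; push_cast; ring
        have hlen : phi2 r₂ k (i + j - 1) = (k i + k j) / 2 := by
          rw [← hm4, ← hc1, show i + j - i = j by omega]
        rw [hc, hlen]
    · by_cases hc2 : i < istar r₂ k (i + j)
      · -- left of minimizer: (i, j-1)
        have hσ : sig2 r₂ k ⟨i, j⟩ = (i, j - 1) := by
          rw [sig2_mk, if_neg hc1, if_pos hc2]
        refine ⟨?_, ?_, ?_⟩
        · rw [hσ, hT]
          refine Finset.mem_union_right _ (Finset.mem_image.2 ⟨⟨i, j - 1⟩, ?_, rfl⟩)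
          simp only [Finset.mem_sigma, Finset.mem_Icc]
          omega
        · rw [hσ, tau2_mk, if_neg (by omega : ¬ i = 0),
            show i + (j - 1) + 1 = i + j by omega, if_pos hc2]
          simp only [Sigma.mk.inj_iff, heq_eq_eq, true_and, and_true]
          omega
        · rw [hσ, g2_mk, if_neg (by omega : ¬ i = 0)]
          have hc : (d : ℂ) * ((i : ℂ) + ((j - 1 : ℕ) : ℂ) - 1) / 2
              = (d : ℂ) * ((i : ℂ) + (j : ℂ) - 2) / 2 := by
            rw [Nat.cast_sub (show 1 ≤ j by omega)]; push_cast; ring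
          rw [hc]
          apply pochPoly_dvd_of_le
          have : k j ≤ k (j - 1) := kmono (j - 1) j (by omega) (by omega) (by omega)
          exact Nat.div_le_div_right (by omega)
      · -- right of minimizer: (i-1, j)
        have hgt : istar r₂ k (i + j) < i := by omega
        have hσ : sig2 r₂ k ⟨i, j⟩ = (i - 1, j) := by
          rw [sig2_mk, if_neg hc1, if_neg hc2]
        refine ⟨?_, ?_, ?_⟩
        · rw [hσ, hT]
          refine Finset.mem_union_right _ (Finset.mem_image.2 ⟨⟨i - 1, j⟩, ?_, rfl⟩)
          simp only [Finset.mem_sigma, Finset.mem_Icc]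
          omega
        · rw [hσ, tau2_mk, if_neg (by omega : ¬ i - 1 = 0),
            show i - 1 + j + 1 = i + j by omega,
            if_neg (by omega : ¬ i - 1 < istar r₂ k (i + j))]
          simp only [Sigma.mk.inj_iff, heq_eq_eq, true_and, and_true]
          omega
        · rw [hσ, g2_mk, if_neg (by omega : ¬ i - 1 = 0)]
          have hc : (d : ℂ) * (((i - 1 : ℕ) : ℂ) + (j : ℂ) - 1) / 2
              = (d : ℂ) * ((i : ℂ) + (j : ℂ) - 2) / 2 := by
            rw [Nat.cast_sub (show 1 ≤ i by omega)]; push_cast; ring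
          rw [hc]
          apply pochPoly_dvd_of_le
          have : k i ≤ k (i - 1) := kmono (i - 1) i (by omega) (by omega) (by omega)
          exact Nat.div_le_div_right (by omega)
  apply prod_dvd_prod_of_inj _ _ _ _ (sig2 r₂ k)
  · exact fun a ha => (key a ha).1
  · intro a ha b hb h
    rw [← (key a ha).2.1, ← (key b hb).2.1, h]
  · exact fun a ha => (key a ha).2.2

/-- Theorem 6.2 (case ε₂ = 2, restricted): `(λ)_{φ₂(k),d}·C₂^{d,2d}(λ,k)` is a
polynomial in `λ`. -/
theorem denom_dvd_phiPoly_mul_numer_simple₂ (d r₂ : ℕ) (hd : 0 < d) (hr₂ : 0 < r₂)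
    (k : ℕ → ℕ) (hk : ∀ i j, 1 ≤ i → i ≤ j → j ≤ r₂ → k j ≤ k i)
    (hk0 : k (r₂ + 1) = 0) :
    denom2 d r₂ k ∣ phiPoly2 d r₂ k * numer2 d r₂ k := by
  have kmono : ∀ i j, 1 ≤ i → i ≤ j → j ≤ r₂ + 1 → k j ≤ k i := by
    intro i j hi hij hj
    rcases eq_or_lt_of_le hj with h | h
    · rw [h, hk0]; exact Nat.zero_le _
    · exact hk i j hi hij (by omega)
  have h1 := D1_dvd_phi_mul_N1 d r₂ k kmono hk0
  have h2 := D2_dvd_N2 d r₂ k kmono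
  rw [denom2, numer2]
  have := mul_dvd_mul h1 h2
  rwa [mul_assoc] at this
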